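/- Let C be a set equipped with operations d : C × C → C and f : C → C satisfying d(x,x) = x, d(d(x,y), d(z,w)) = d(x,w), and d(f(x), y) = d(x,y) for all x, y, z, w ∈ C. Define relations E₁ and E₂ on C by: a E₁ b iff there exists c ∈ C with d(a,c) = d(b,c), and a E₂ b iff there exists c ∈ C with d(c,a) = d(c,b). Then: (i) E₁ and E₂ are equivalence relations; (ii) if a E₁ a′ and b E₂ b′ then d(a,b) = d(a′,b′); and (iii) the map C → C/E₁ × C/E₂ sending c to (c/E₁, c/E₂) is a bijection, whose inverse sends (a/E₁, b/E₂) to d(a,b). -/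
import Mathlib


/-- Let `(C; d, f)` satisfy `d(x,x) = x`, `d(d(x,y),d(z,w)) = d(x,w)` and
`d(f(x),y) = d(x,y)`.  Define `a E₁ b ↔ ∃ c, d(a,c) = d(b,c)` and
`a E₂ b ↔ ∃ c, d(c,a) = d(c,b)`.  Then (i) `E₁` and `E₂` are equivalence
relations; (ii) if `a E₁ a'` and `b E₂ b'` then `d(a,b) = d(a',b')`;
(iii) the map `c ↦ (c/E₁, c/E₂)` is a bijection `C → C/E₁ × C/E₂`, whose
inverse sends `(a/E₁, b/E₂)` to `d(a,b)`. -/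
theorem stmt_13 (C : Type*) (d : C → C → C) (f : C → C)
    (h1 : ∀ x, d x x = x)
    (h2 : ∀ x y z w, d (d x y) (d z w) = d x w)
    (h3 : ∀ x y, d (f x) y = d x y) :
    Equivalence (fun a b : C => ∃ c, d a c = d b c) ∧
    Equivalence (fun a b : C => ∃ c, d c a = d c b) ∧
    (∀ a a' b b' : C, (∃ c, d a c = d a' c) → (∃ c, d c b = d c b') →
      d a b = d a' b') ∧
    Function.Bijective
      (fun x : C =>
        (Quot.mk (fun a b : C => ∃ c, d a c = d b c) x,
         Quot.mk (fun a b : C => ∃ c, d c a = d c b) x)) ∧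
    (∀ a b : C,
      (Quot.mk (fun a b : C => ∃ c, d a c = d b c) (d a b),
       Quot.mk (fun a b : C => ∃ c, d c a = d c b) (d a b)) =
      (Quot.mk (fun a b : C => ∃ c, d a c = d b c) a,
       Quot.mk (fun a b : C => ∃ c, d c a = d c b) b)) := by
  have key1 : ∀ a b : C, (∃ c, d a c = d b c) → ∀ y, d a y = d b y := by
    rintro a b ⟨c, hc⟩ y
    rw [← h2 a c c y, hc, h2]
  have key2 : ∀ a b : C, (∃ c, d c a = d c b) → ∀ x, d x a = d x b := by
    rintro a b ⟨c, hc⟩ x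
    rw [← h2 x c c a, hc, h2]
  have e1 : Equivalence (fun a b : C => ∃ c, d a c = d b c) := by
    refine ⟨fun a => ⟨a, rfl⟩, ?_, ?_⟩
    · rintro a b h; exact ⟨a, (key1 a b h a).symm⟩
    · rintro a b c h h'; exact ⟨a, by rw [key1 a b h a, key1 b c h' a]⟩
  have e2 : Equivalence (fun a b : C => ∃ c, d c a = d c b) := by
    refine ⟨fun a => ⟨a, rfl⟩, ?_, ?_⟩
    · rintro a b h; exact ⟨a, (key2 a b h a).symm⟩
    · rintro a b c h h'; exact ⟨a, by rw [key2 a b h a, key2 b c h' a]⟩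
  have comp : ∀ a a' b b' : C, (∃ c, d a c = d a' c) → (∃ c, d c b = d c b') →
      d a b = d a' b' := by
    intro a a' b b' h h'
    rw [key1 a a' h b, key2 b b' h' a']
  refine ⟨e1, e2, comp, ⟨?_, ?_⟩, ?_⟩
  · -- injective
    intro a b hab
    simp only [Prod.mk.injEq] at hab
    obtain ⟨hL, hR⟩ := hab
    have hL' : d a = d b := congrArg (Quot.lift (fun a : C => d a)
      (fun a b h => funext (key1 a b h))) hL
    have hR' : (fun x => d x a) = (fun x => d x b) :=
      congrArg (Quot.lift (fun b : C => fun x => d x b)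
      (fun a b h => funext (fun x => key2 a b h x))) hR
    calc a = d a a := (h1 a).symm
      _ = d b a := congrFun hL' a
      _ = d b b := congrFun hR' b
      _ = b := h1 b
  · -- surjective
    rintro ⟨qa, qb⟩
    obtain ⟨a, rfl⟩ := Quot.exists_rep qa
    obtain ⟨b, rfl⟩ := Quot.exists_rep qb
    refine ⟨d a b, Prod.ext ?_ ?_⟩
    · exact Quot.sound ⟨b, by rw [show d (d a b) b = d a b by
        conv_lhs => rw [← h1 b]; rw [h2]]⟩
    · exact Quot.sound ⟨a, by rw [show d a (d a b) = d a b by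
        conv_lhs => rw [← h1 a]; rw [h2]]⟩
  · intro a b
    refine Prod.ext ?_ ?_
    · exact Quot.sound ⟨b, by conv_lhs => rw [← h1 b]; rw [h2]⟩
    · exact Quot.sound ⟨a, by conv_lhs => rw [← h1 a]; rw [h2]⟩
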